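/- Let D be the list consisting of 7 items of size 6, then 7 items of size 10, then 3 items of size 16, then 10 items of size 34, then 10 items of size 51 (in this order), with bin capacity S = 101. Then for every integer k ≥ 1, OPT(D_k) = 10k and FFk(D_k) = 17 + 10(k−1) = 10k + 7; in particular FFk(D_k)/OPT(D_k) = 1 + 7/(10k), which equals 1.7 for k = 1, is at most 1.35 for every k ≥ 2, and decreases as k increases. -/

import Mathlib

/-- One step of First-Fit for `k`-times bin packing: insert (a copy of) the item
with index `i` and size `d i` into the first bin that has enough remaining capacity
and does not already contain another copy of item `i`; open a new bin otherwise. -/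
noncomputable def ffInsert (d : ℕ → ℝ) (S : ℝ) (i : ℕ) :
    List (Finset ℕ) → List (Finset ℕ)
  | [] => [{i}]
  | b :: bs =>
      if (∑ j ∈ b, d j) + d i ≤ S ∧ i ∉ b then insert i b :: bs
      else b :: ffInsert d S i bs

/-- The bins produced by `FFk` on `D_k` (`k` consecutive copies of the list `D`). -/
noncomputable def ffkBins (S : ℝ) (k : ℕ) (D : List ℝ) : List (Finset ℕ) :=
  ((List.replicate k (List.range D.length)).flatten).foldl
    (fun bins i => ffInsert (fun j => D.getD j 0) S i bins) []

/-- `FFk(D_k)`: the number of bins produced by First-Fit for `k`-times bin packing. -/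
noncomputable def FFk (S : ℝ) (k : ℕ) (D : List ℝ) : ℕ := (ffkBins S k D).length

/-- `OPT(D_k)`: the minimum number of bins of a `k`-times packing of `D`. -/
noncomputable def kOPT (S : ℝ) (k : ℕ) (D : List ℝ) : ℕ :=
  sInf {q | ∃ B : Fin q → Finset (Fin D.length),
    (∀ j, ∑ i ∈ B j, D.get i ≤ S) ∧
    (∀ i, (Finset.univ.filter fun j => i ∈ B j).card = k)}

/-! ### A computable model of the instance -/

def ndf : ℕ → ℕ := fun j =>
  if j < 7 then 6 else if j < 14 then 10 else if j < 17 then 16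
  else if j < 27 then 34 else if j < 37 then 51 else 0

noncomputable def df : ℕ → ℝ := fun j => (ndf j : ℝ)

def nInsert (i : ℕ) : List (Finset ℕ) → List (Finset ℕ)
  | [] => [{i}]
  | b :: bs =>
      if (∑ j ∈ b, ndf j) + ndf i ≤ 101 ∧ i ∉ b then insert i b :: bs
      else b :: nInsert i bs

def nstep : List (Finset ℕ) → ℕ → List (Finset ℕ) := fun bins i => nInsert i bins

lemma ffInsert_eq_nInsert : ∀ (L : List (Finset ℕ)) (i : ℕ),
    ffInsert df 101 i L = nInsert i L := by
  intro L i
  induction L with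
  | nil => rfl
  | cons b bs ih =>
      have hc : ((∑ j ∈ b, df j) + df i ≤ (101:ℝ) ∧ i ∉ b)
          ↔ ((∑ j ∈ b, ndf j) + ndf i ≤ 101 ∧ i ∉ b) := by
        have hs : (∑ j ∈ b, df j) = ((∑ j ∈ b, ndf j : ℕ) : ℝ) := by
          simp only [df]
          rw [Nat.cast_sum]
        have hd : df i = (ndf i : ℝ) := rfl
        constructor
        · rintro ⟨h1, h2⟩
          refine ⟨?_, h2⟩
          rw [hs, hd] at h1
          exact_mod_cast h1
        · rintro ⟨h1, h2⟩
          refine ⟨?_, h2⟩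
          rw [hs, hd]
          exact_mod_cast h1
      rw [ffInsert, nInsert, ih]
      by_cases h : (∑ j ∈ b, ndf j) + ndf i ≤ 101 ∧ i ∉ b
      · rw [if_pos (hc.mpr h), if_pos h]
      · rw [if_neg (fun hh => h (hc.mp hh)), if_neg h]

lemma nInsert_neg (i : ℕ) (b : Finset ℕ) (bs : List (Finset ℕ))
    (h : ¬((∑ j ∈ b, ndf j) + ndf i ≤ 101 ∧ i ∉ b)) :
    nInsert i (b :: bs) = b :: nInsert i bs := by rw [nInsert, if_neg h]

def NBlocks (b : Finset ℕ) : Prop :=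
  ∀ i, i < 37 → ¬((∑ j ∈ b, ndf j) + ndf i ≤ 101 ∧ i ∉ b)

instance : DecidablePred NBlocks := fun _ => Nat.decidableBallLT 37 _

lemma nInsert_append (i : ℕ) (hi : i < 37) (X T : List (Finset ℕ))
    (hX : ∀ b ∈ X, NBlocks b) :
    nInsert i (X ++ T) = X ++ nInsert i T := by
  induction X with
  | nil => rfl
  | cons b bs ih =>
      rw [List.cons_append, nInsert_neg i b _ (hX b (by simp) i hi),
        ih (fun c hc => hX c (by simp [hc])), List.cons_append]

lemma foldl_blocked (X : List (Finset ℕ)) (hX : ∀ b ∈ X, NBlocks b) :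
    ∀ (l : List ℕ), (∀ i ∈ l, i < 37) → ∀ T : List (Finset ℕ),
      List.foldl nstep (X ++ T) l = X ++ List.foldl nstep T l := by
  intro l
  induction l with
  | nil => intro _ T; rfl
  | cons i l ih =>
      intro hl T
      rw [List.foldl_cons, List.foldl_cons]
      have : nstep (X ++ T) i = X ++ nstep T i :=
        nInsert_append i (hl i (by simp)) X T hX
      rw [this]
      exact ih (fun j hj => hl j (by simp [hj])) (nstep T i)

/-! ### The concrete first-fit states -/

def P8 : List (Finset ℕ) :=
  [{11, 10, 9, 8, 7, 6, 5, 4, 3, 2, 1, 0},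
   {4, 3, 2, 1, 0, 16, 15, 14, 13, 12},
   {8, 7, 6, 5, 18, 17},
   {11, 10, 9, 20, 19},
   {1, 0, 13, 12, 22, 21},
   {15, 14, 24, 23},
   {3, 2, 16, 26, 25},
   {5, 4, 17, 27}]

def T29 : List (Finset ℕ) :=
  [{7, 6, 18, 28},
   {8, 19, 29},
   {9, 20, 30},
   {10, 21, 31},
   {11, 22, 32},
   {12, 23, 33},
   {13, 24, 34},
   {14, 25, 35},
   {15, 26, 36},
   {17, 16, 27},
   {18, 28},
   {19, 29},
   {20, 30},
   {21, 31},
   {22, 32},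
   {23, 33},
   {24, 34},
   {25, 35},
   {26, 36},
   {27},
   {28},
   {29},
   {30},
   {31},
   {32},
   {33},
   {34},
   {35},
   {36}]

def MM : List (Finset ℕ) :=
  [{7, 6, 18, 28},
   {0, 8, 19, 29},
   {1, 9, 20, 30},
   {2, 10, 21, 31},
   {3, 11, 22, 32},
   {4, 12, 23, 33},
   {5, 13, 24, 34},
   {14, 25, 35},
   {15, 26, 36},
   {17, 16, 27}]

def nffb (k : ℕ) : List (Finset ℕ) :=
  ((List.replicate k (List.range 37)).flatten).foldl nstep []

lemma nffb_succ (k : ℕ) : nffb (k+1) = List.foldl nstep (nffb k) (List.range 37) := by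
  unfold nffb
  rw [List.replicate_succ', List.flatten_append, List.foldl_append]
  simp only [List.flatten_cons, List.flatten_nil, List.append_nil]

lemma nffb1_len : (nffb 1).length = 17 := by decide
lemma nffb2_len : (nffb 2).length = 27 := by decide
lemma nffb3 : nffb 3 = P8 ++ T29 := by decide
lemma calcT : List.foldl nstep T29 (List.range 37) = MM ++ T29 := by decide
lemma blocksP8 : ∀ b ∈ P8, NBlocks b := by decide
lemma blocksM : ∀ b ∈ MM, NBlocks b := by decide

lemma stateEq : ∀ m, nffb (3+m) = (P8 ++ (List.replicate m MM).flatten) ++ T29 := by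
  intro m
  induction m with
  | zero => simpa using nffb3
  | succ n ih =>
      have hb : ∀ b ∈ P8 ++ (List.replicate n MM).flatten, NBlocks b := by
        intro b hb
        rcases List.mem_append.mp hb with h | h
        · exact blocksP8 b h
        · rcases List.mem_flatten.mp h with ⟨l, hl, hbl⟩
          rw [List.eq_of_mem_replicate hl] at hbl
          exact blocksM b hbl
      rw [show 3+(n+1) = (3+n)+1 from rfl, nffb_succ, ih,
        foldl_blocked _ hb (List.range 37) (fun i hi => List.mem_range.mp hi) T29,
        calcT, List.replicate_succ', List.flatten_append]
      simp only [List.flatten_cons, List.flatten_nil, List.append_nil, List.append_assoc]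

lemma len_rep : ∀ m, ((List.replicate m MM).flatten).length = 10*m := by
  intro m
  induction m with
  | zero => rfl
  | succ n ih =>
      rw [List.replicate_succ, List.flatten_cons, List.length_append, ih]
      rw [show (MM).length = 10 from rfl]
      omega

lemma nffb_len (k : ℕ) (hk : 1 ≤ k) : (nffb k).length = 10*k+7 := by
  rcases k with _|_|_|m
  · omega
  · exact nffb1_len
  · exact nffb2_len
  · rw [show m+1+1+1 = 3+m by omega, stateEq m]
    simp only [List.length_append, len_rep]
    rw [show (P8).length = 8 from rfl, show (T29).length = 29 from rfl]
    omega

/-! ### Transfer to the real-valued instance -/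

def rfun : ℕ → ℕ := fun v =>
  if v < 7 then v + 3 else if v < 14 then v - 7 + 3 else if v < 17 then v - 14
  else if v < 27 then v - 17 else v - 27

lemma cardmod (k r : ℕ) (hr : r < 10) :
    (Finset.univ.filter fun q : Fin (10*k) => (q:ℕ) % 10 = r).card = k := by
  have h : (Finset.univ.filter fun q : Fin (10*k) => (q:ℕ) % 10 = r).card
      = (Finset.range k).card := by
    refine Finset.card_bij' (fun q _ => (q : ℕ) / 10)
      (fun m hm => (⟨10*m + r, ?_⟩ : Fin (10*k))) ?_ ?_ ?_ ?_
    · simp only [Finset.mem_range] at hm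
      omega
    · intro a ha
      simp only [Finset.mem_filter, Finset.mem_univ, true_and] at ha
      simp only [Finset.mem_range]
      have h10 : (a:ℕ) < 10*k := a.isLt
      omega
    · intro m hm
      simp only [Finset.mem_filter, Finset.mem_univ, true_and]
      omega
    · intro a ha
      simp only [Finset.mem_filter, Finset.mem_univ, true_and] at ha
      apply Fin.ext
      simp only
      omega
    · intro m hm
      simp only
      omega
  rw [h, Finset.card_range]

section WithD
variable (D : List ℝ)
  (hD : D = List.replicate 7 (6 : ℝ) ++ List.replicate 7 10 ++
      List.replicate 3 16 ++ List.replicate 10 34 ++ List.replicate 10 51)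

include hD

lemma hdf_eq : (fun j => D.getD j 0) = df := by
  subst hD
  funext j
  rcases Nat.lt_or_ge j 37 with h | h
  · interval_cases j <;> norm_num [df, ndf] <;> rfl
  · rw [List.getD_eq_default _ _ (by simpa using h)]
    simp only [df, ndf]
    rw [if_neg (by omega), if_neg (by omega), if_neg (by omega), if_neg (by omega),
      if_neg (by omega)]
    norm_num

lemma hlen_eq : D.length = 37 := by rw [hD]; rfl

lemma bins_eq (k : ℕ) : ffkBins 101 k D = nffb k := by
  unfold ffkBins nffb
  rw [hlen_eq D hD, hdf_eq D hD]
  have hstep : (fun bins i => ffInsert df 101 i bins) = nstep := by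
    funext bins i
    exact ffInsert_eq_nInsert bins i
  rw [hstep]

lemma FFk_val (k : ℕ) (hk : 1 ≤ k) : FFk 101 k D = 10*k+7 := by
  rw [FFk, bins_eq D hD k, nffb_len k hk]

/-! ### The optimum -/

omit hD in
lemma hget (hDl : D = List.replicate 7 (6 : ℝ) ++ List.replicate 7 10 ++
      List.replicate 3 16 ++ List.replicate 10 34 ++ List.replicate 10 51)
    (i : Fin D.length) : D.get i = (ndf i.val : ℝ) := by
  have h1 : D.get i = D.getD i.val 0 := by
    rw [List.get_eq_getElem, List.getD_eq_getElem D 0 i.isLt]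
  rw [h1, congrFun (hdf_eq D hDl) i.val, df]

lemma kOPT_val (k : ℕ) (hk : 1 ≤ k) : kOPT 101 k D = 10*k := by
  subst hD
  set Dl := List.replicate 7 (6 : ℝ) ++ List.replicate 7 10 ++
      List.replicate 3 16 ++ List.replicate 10 34 ++ List.replicate 10 51 with hDl
  have hDeq : Dl = Dl := rfl
  -- the explicit optimal packing
  have hrb : ∀ v, v < 37 → rfun v < 10 := by decide
  have hsum101 : ∀ r, r < 10 →
      (∑ i ∈ Finset.univ.filter (fun i : Fin Dl.length => rfun i.val = r), ndf i.val)
        = 101 := by decide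
  have hlen37 : Dl.length = 37 := rfl
  have hmem : 10*k ∈ {q | ∃ B : Fin q → Finset (Fin Dl.length),
      (∀ j, ∑ i ∈ B j, Dl.get i ≤ 101) ∧
      (∀ i, (Finset.univ.filter fun j => i ∈ B j).card = k)} := by
    refine ⟨fun q => Finset.univ.filter (fun i : Fin Dl.length => rfun i.val = (q:ℕ) % 10),
      ?_, ?_⟩
    · intro j
      have : (∑ i ∈ Finset.univ.filter
            (fun i : Fin Dl.length => rfun i.val = (j:ℕ) % 10), Dl.get i)
          = ((∑ i ∈ Finset.univ.filter
            (fun i : Fin Dl.length => rfun i.val = (j:ℕ) % 10), ndf i.val : ℕ) : ℝ) := by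
        rw [Nat.cast_sum]
        exact Finset.sum_congr rfl (fun i _ => hget Dl hDl i)
      rw [this, hsum101 ((j:ℕ) % 10) (by omega)]
      norm_num
    · intro i
      have hmemiff : ∀ q : Fin (10*k),
          (i ∈ Finset.univ.filter (fun i' : Fin Dl.length => rfun i'.val = (q:ℕ) % 10))
            ↔ ((q:ℕ) % 10 = rfun i.val) := by
        intro q
        simp only [Finset.mem_filter, Finset.mem_univ, true_and]
        exact eq_comm
      have : (Finset.univ.filter fun q : Fin (10*k) =>
            i ∈ Finset.univ.filter (fun i' : Fin Dl.length => rfun i'.val = (q:ℕ) % 10))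
          = Finset.univ.filter fun q : Fin (10*k) => (q:ℕ) % 10 = rfun i.val := by
        apply Finset.filter_congr
        intro q _
        simp only [hmemiff q]
      rw [this]
      exact cardmod k (rfun i.val) (hrb i.val (by have := i.isLt; omega))
  have hlb : ∀ q ∈ {q | ∃ B : Fin q → Finset (Fin Dl.length),
      (∀ j, ∑ i ∈ B j, Dl.get i ≤ 101) ∧
      (∀ i, (Finset.univ.filter fun j => i ∈ B j).card = k)}, 10*k ≤ q := by
    rintro q ⟨B, hsum, hcount⟩
    have htot : ∑ i : Fin Dl.length, Dl.get i = 1010 := by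
      have : ∑ i : Fin Dl.length, Dl.get i = ((∑ i : Fin Dl.length, ndf i.val : ℕ) : ℝ) := by
        rw [Nat.cast_sum]
        exact Finset.sum_congr rfl (fun i _ => hget Dl hDl i)
      rw [this, show (∑ i : Fin Dl.length, ndf i.val) = 1010 from by decide]
      norm_num
    have key : (1010 : ℝ) * k ≤ 101 * q := by
      have step1 : ∑ j : Fin q, ∑ i ∈ B j, Dl.get i ≤ ∑ _j : Fin q, (101:ℝ) :=
        Finset.sum_le_sum (fun j _ => hsum j)
      have step2 : ∑ _j : Fin q, (101:ℝ) = 101 * q := by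
        rw [Finset.sum_const, Finset.card_univ, Fintype.card_fin, nsmul_eq_mul, mul_comm]
      have step3 : ∑ j : Fin q, ∑ i ∈ B j, Dl.get i = (1010 : ℝ) * k := by
        calc ∑ j : Fin q, ∑ i ∈ B j, Dl.get i
            = ∑ j : Fin q, ∑ i : Fin Dl.length, if i ∈ B j then Dl.get i else 0 := by
              refine Finset.sum_congr rfl (fun j _ => ?_)
              rw [Finset.sum_ite_mem, Finset.univ_inter]
          _ = ∑ i : Fin Dl.length, ∑ j : Fin q, if i ∈ B j then Dl.get i else 0 :=
              Finset.sum_comm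
          _ = ∑ i : Fin Dl.length,
                ((Finset.univ.filter fun j => i ∈ B j).card : ℝ) * Dl.get i := by
              refine Finset.sum_congr rfl (fun i _ => ?_)
              rw [Finset.sum_ite, Finset.sum_const, Finset.sum_const_zero, add_zero,
                nsmul_eq_mul]
          _ = ∑ i : Fin Dl.length, (k : ℝ) * Dl.get i := by
              refine Finset.sum_congr rfl (fun i _ => ?_)
              rw [hcount i]
          _ = (k : ℝ) * ∑ i : Fin Dl.length, Dl.get i := by rw [Finset.mul_sum]
          _ = (1010 : ℝ) * k := by rw [htot]; ring
      rw [← step2, ← step3]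
      exact step1
    by_contra hcon
    push_neg at hcon
    have hq : (q : ℝ) ≤ 10*k - 1 := by
      have : q + 1 ≤ 10*k := hcon
      have : (q:ℝ) + 1 ≤ ((10*k : ℕ):ℝ) := by exact_mod_cast this
      push_cast at this
      linarith
    have hk' : (1:ℝ) ≤ k := by exact_mod_cast hk
    nlinarith
  rw [kOPT]
  exact le_antisymm (Nat.sInf_le hmem) (le_csInf ⟨10*k, hmem⟩ hlb)

end WithD

theorem stmt_7 (D : List ℝ)
    (hD : D = List.replicate 7 (6 : ℝ) ++ List.replicate 7 10 ++
      List.replicate 3 16 ++ List.replicate 10 34 ++ List.replicate 10 51) :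
    (∀ k : ℕ, 1 ≤ k →
      kOPT 101 k D = 10 * k ∧
      FFk 101 k D = 10 * k + 7 ∧
      (FFk 101 k D : ℝ) / (kOPT 101 k D : ℝ) = 1 + 7 / (10 * (k : ℝ))) ∧
    ((1 : ℝ) + 7 / (10 * (1 : ℝ)) = 1.7) ∧
    (∀ k : ℕ, 2 ≤ k → (1 : ℝ) + 7 / (10 * (k : ℝ)) ≤ 1.35) ∧
    (∀ k₁ k₂ : ℕ, 1 ≤ k₁ → k₁ < k₂ →
      (1 : ℝ) + 7 / (10 * (k₂ : ℝ)) < 1 + 7 / (10 * (k₁ : ℝ))) := by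
  refine ⟨?_, by norm_num, ?_, ?_⟩
  · intro k hk
    have h1 : kOPT 101 k D = 10 * k := kOPT_val D hD k hk
    have h2 : FFk 101 k D = 10 * k + 7 := FFk_val D hD k hk
    refine ⟨h1, h2, ?_⟩
    rw [h1, h2]
    have hk' : (1:ℝ) ≤ (k:ℝ) := by exact_mod_cast hk
    have h0 : (10:ℝ) * k ≠ 0 := by positivity
    push_cast
    field_simp <;> ring
  · intro k hk
    have hk' : (2:ℝ) ≤ (k:ℝ) := by exact_mod_cast hk
    have h0 : (0:ℝ) < 10 * k := by linarith
    rw [show (1.35:ℝ) = 1 + 0.35 from by norm_num, add_le_add_iff_left, div_le_iff₀ h0]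
    linarith
  · intro k₁ k₂ hk1 hlt
    have h1 : (1:ℝ) ≤ (k₁:ℝ) := by exact_mod_cast hk1
    have h2 : (k₁:ℝ) < (k₂:ℝ) := by exact_mod_cast hlt
    have hp1 : (0:ℝ) < 10 * k₁ := by linarith
    have hp2 : 10 * (k₁:ℝ) < 10 * k₂ := by linarith
    have := div_lt_div_of_pos_left (by norm_num : (0:ℝ) < 7) hp1 hp2
    linarith
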